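/- Let ρ and σ be density matrices on ℂ^d with spectral decompositions ρ = Σ_i λ_i |x_i⟩⟨x_i| and σ = Σ_j μ_j |y_j⟩⟨y_j| (orthonormal eigenbases {x_i} and {y_j}), and let P and Q be the associated Nussbaum–Szkoła distributions. Then for every s with 0 ≤ s < 1 and every α with 0 ≤ α ≤ 1 − s, the quantum and classical optimal type-II errors satisfy β_α(ρ,σ) ≥ s · β_{α/(1−s)}(P,Q). -/

import Mathlib

open Matrix BigOperators ComplexOrder

noncomputable section

/-- The optimal quantum type-II error trade-off. -/
def qBeta {d : ℕ} (α : ℝ) (ρ σ : Matrix (Fin d) (Fin d) ℂ) : ℝ :=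
  sInf { b : ℝ | ∃ T : Matrix (Fin d) (Fin d) ℂ,
    T.PosSemidef ∧ (1 - T).PosSemidef ∧ ((T * ρ).trace.re ≤ α) ∧
    b = 1 - (T * σ).trace.re }

/-- The optimal classical type-II error trade-off for randomized tests. -/
def cBeta {X : Type*} [Fintype X] (α : ℝ) (P Q : X → ℝ) : ℝ :=
  sInf { b : ℝ | ∃ π : X → ℝ, (∀ x, 0 ≤ π x ∧ π x ≤ 1) ∧
    (∑ x, P x * π x) ≤ α ∧ b = ∑ x, Q x * (1 - π x) }

namespace NSaux

lemma diag_re {n : ℕ} {M : Matrix (Fin n) (Fin n) ℂ} (h : M.PosSemidef) (i : Fin n) :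
    0 ≤ (M i i).re := by
  have := h.diag_nonneg (i := i)
  exact (Complex.le_def.mp this).1

lemma sub_sq {n : ℕ} {T : Matrix (Fin n) (Fin n) ℂ} (h1 : T.PosSemidef)
    (h2 : (1 - T).PosSemidef) : (T - T * T).PosSemidef := by
  open scoped MatrixOrder in
  obtain ⟨S, hS⟩ : ∃ S, S = CFC.sqrt T := ⟨_, rfl⟩
  open scoped MatrixOrder in
  have hsp : S.PosSemidef := hS ▸ (CFC.sqrt_nonneg T).posSemidef
  open scoped MatrixOrder in
  have hmul : S * S = T := hS ▸ CFC.sqrt_mul_sqrt_self T h1.nonneg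
  have key : T - T * T = S * (1 - T) * Sᴴ := by
    rw [hsp.1.eq, Matrix.mul_sub, Matrix.mul_one, Matrix.sub_mul, hmul, ← hmul]
    noncomm_ring
  rw [key]
  exact h2.mul_mul_conjTranspose_same _

lemma unitary_of_orthonormal {d : ℕ} (x : Fin d → (Fin d → ℂ))
    (hx : ∀ i j, star (x i) ⬝ᵥ x j = if i = j then 1 else 0) :
    (Matrix.of fun a i => x i a)ᴴ * (Matrix.of fun a i => x i a) = 1 := by
  ext i j
  simpa [Matrix.mul_apply, dotProduct, Matrix.one_apply] using hx i j

lemma entry_eq {d : ℕ} (x y : Fin d → (Fin d → ℂ)) (M : Matrix (Fin d) (Fin d) ℂ) (i j : Fin d) :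
    ((Matrix.of fun a i => x i a)ᴴ * M * (Matrix.of fun a i => y i a)) i j
      = star (x i) ⬝ᵥ (M *ᵥ y j) := by
  simp only [Matrix.mul_apply, Matrix.conjTranspose_apply, Matrix.of_apply, dotProduct,
    Matrix.mulVec, Pi.star_apply, Finset.sum_mul, Finset.mul_sum]
  rw [Finset.sum_comm]
  apply Finset.sum_congr rfl; intros a _; apply Finset.sum_congr rfl; intros b _; ring

lemma entryC {d : ℕ} (x y : Fin d → (Fin d → ℂ)) (i j : Fin d) :
    ((Matrix.of fun a i => x i a)ᴴ * (Matrix.of fun a i => y i a)) i j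
      = star (x i) ⬝ᵥ y j := by
  simp [Matrix.mul_apply, dotProduct]

lemma specdec {d : ℕ} (lam : Fin d → ℝ) (x : Fin d → (Fin d → ℂ)) :
    (∑ i, (lam i : ℂ) • vecMulVec (x i) (star (x i)))
      = (Matrix.of fun a i => x i a) * diagonal (fun i => (lam i : ℂ)) *
        (Matrix.of fun a i => x i a)ᴴ := by
  ext a b
  simp only [Matrix.sum_apply, Pi.smul_apply, smul_eq_mul, vecMulVec_apply, Pi.star_apply,
    Matrix.mul_apply, Matrix.conjTranspose_apply, Matrix.of_apply, diagonal_apply,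
    Finset.mul_sum, Finset.sum_mul]
  rw [Finset.sum_comm]
  apply Finset.sum_congr rfl; intros i _
  simp [Finset.sum_ite_eq, Finset.mul_sum, vecMulVec_apply]
  ring

lemma trace_diag {d : ℕ} (M : Matrix (Fin d) (Fin d) ℂ) (lam : Fin d → ℝ) :
    (M * diagonal (fun i => (lam i : ℂ))).trace.re = ∑ i, lam i * (M i i).re := by
  simp [Matrix.trace, Matrix.diag, Matrix.mul_apply, diagonal_apply, Complex.re_sum]
  apply Finset.sum_congr rfl; intros i _; ring

lemma row_normSq {d : ℕ} (A : Matrix (Fin d) (Fin d) ℂ) (i : Fin d) :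
    ∑ j, Complex.normSq (A i j) = ((A * Aᴴ) i i).re := by
  simp [Matrix.mul_apply, Complex.mul_conj, Complex.re_sum]

lemma col_normSq {d : ℕ} (A : Matrix (Fin d) (Fin d) ℂ) (j : Fin d) :
    ∑ i, Complex.normSq (A i j) = ((Aᴴ * A) j j).re := by
  simp [Matrix.mul_apply, Complex.mul_conj', Complex.re_sum, Complex.normSq_apply]

lemma key_ineq (s : ℝ) (hs0 : 0 ≤ s) (hs1 : s < 1) (a g : ℂ) :
    s * (1 - s) * Complex.normSq (a + g)
      ≤ s * Complex.normSq a + (1 - s) * Complex.normSq g := by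
  have h1 : ‖a + g‖ ≤ ‖a‖ + ‖g‖ := norm_add_le a g
  have h2 : ∀ z : ℂ, Complex.normSq z = ‖z‖^2 := fun z => (Complex.sq_norm z).symm
  have h3 : ‖a + g‖ ^ 2 ≤ (‖a‖ + ‖g‖)^2 :=
    pow_le_pow_left₀ (norm_nonneg _) h1 2
  rw [h2, h2, h2]
  nlinarith [sq_nonneg (s * ‖a‖ - (1 - s) * ‖g‖),
    mul_nonneg hs0 (by linarith : (0:ℝ) ≤ 1 - s), norm_nonneg a, norm_nonneg g]

end NSaux

/-- Theorem 1: the quantum error trade-off is lower bounded in terms of the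
classical trade-off of the Nussbaum–Szkoła distributions. -/
theorem nussbaum_szkola_lower_bound {d : ℕ} (ρ σ : Matrix (Fin d) (Fin d) ℂ)
    (hρ : ρ.PosSemidef) (hρtr : ρ.trace = 1)
    (hσ : σ.PosSemidef) (hσtr : σ.trace = 1)
    (lam mu : Fin d → ℝ) (x y : Fin d → (Fin d → ℂ))
    (hx : ∀ i j, star (x i) ⬝ᵥ x j = if i = j then 1 else 0)
    (hy : ∀ i j, star (y i) ⬝ᵥ y j = if i = j then 1 else 0)
    (hρdec : ρ = ∑ i, (lam i : ℂ) • vecMulVec (x i) (star (x i)))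
    (hσdec : σ = ∑ j, (mu j : ℂ) • vecMulVec (y j) (star (y j)))
    (P Q : Fin d × Fin d → ℝ)
    (hP : ∀ p, P p = lam p.1 * Complex.normSq (star (x p.1) ⬝ᵥ y p.2))
    (hQ : ∀ p, Q p = mu p.2 * Complex.normSq (star (x p.1) ⬝ᵥ y p.2))
    (s α : ℝ) (hs0 : 0 ≤ s) (hs1 : s < 1) (hα0 : 0 ≤ α) (hα1 : α ≤ 1 - s) :
    s * cBeta (α / (1 - s)) P Q ≤ qBeta α ρ σ := by
  have h1s : (0:ℝ) < 1 - s := by linarith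
  obtain ⟨X, hXdef⟩ : ∃ X, X = (Matrix.of fun a i => x i a) := ⟨_, rfl⟩
  obtain ⟨Y, hYdef⟩ : ∃ Y, Y = (Matrix.of fun a i => y i a) := ⟨_, rfl⟩
  have hXU : Xᴴ * X = 1 := hXdef ▸ NSaux.unitary_of_orthonormal x hx
  have hYU : Yᴴ * Y = 1 := hYdef ▸ NSaux.unitary_of_orthonormal y hy
  have hXU' : X * Xᴴ = 1 := mul_eq_one_comm.mp hXU
  have hYU' : Y * Yᴴ = 1 := mul_eq_one_comm.mp hYU
  obtain ⟨Dρ, hDρ⟩ : ∃ D, D = diagonal (fun i => (lam i : ℂ)) := ⟨_, rfl⟩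
  obtain ⟨Dσ, hDσ⟩ : ∃ D, D = diagonal (fun j => (mu j : ℂ)) := ⟨_, rfl⟩
  have hρX : ρ = X * Dρ * Xᴴ := by
    rw [hρdec, hDρ, hXdef]; exact NSaux.specdec lam x
  have hσY : σ = Y * Dσ * Yᴴ := by
    rw [hσdec, hDσ, hYdef]; exact NSaux.specdec mu y
  have sandwich : ∀ (M : Matrix (Fin d) (Fin d) ℂ) (U : Matrix (Fin d) (Fin d) ℂ),
      Uᴴ * U = 1 → Uᴴ * (U * M * Uᴴ) * U = M := fun M U h => by
    calc Uᴴ * (U * M * Uᴴ) * U = (Uᴴ * U) * M * (Uᴴ * U) := by noncomm_ring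
      _ = M := by rw [h]; noncomm_ring
  have hDρpsd : Dρ.PosSemidef := by
    have : Xᴴ * ρ * X = Dρ := by rw [hρX]; exact sandwich Dρ X hXU
    exact this ▸ hρ.conjTranspose_mul_mul_same X
  have hDσpsd : Dσ.PosSemidef := by
    have : Yᴴ * σ * Y = Dσ := by rw [hσY]; exact sandwich Dσ Y hYU
    exact this ▸ hσ.conjTranspose_mul_mul_same Y
  have hlam : ∀ i, 0 ≤ lam i := by
    intro i
    have := (posSemidef_diagonal_iff.mp (hDρ ▸ hDρpsd)) i
    exact_mod_cast (Complex.le_def.mp this).1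
  have hmu : ∀ j, 0 ≤ mu j := by
    intro j
    have := (posSemidef_diagonal_iff.mp (hDσ ▸ hDσpsd)) j
    exact_mod_cast (Complex.le_def.mp this).1
  -- nonnegativity of Q and bddBelow of the classical set
  have hQnn : ∀ p, 0 ≤ Q p := fun p => by
    rw [hQ p]; exact mul_nonneg (hmu p.2) (Complex.normSq_nonneg _)
  have hcbdd : BddBelow { b : ℝ | ∃ π : Fin d × Fin d → ℝ, (∀ x, 0 ≤ π x ∧ π x ≤ 1) ∧
      (∑ x, P x * π x) ≤ α / (1 - s) ∧ b = ∑ x, Q x * (1 - π x) } := by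
    refine ⟨0, ?_⟩
    rintro b ⟨π, hπ, _, rfl⟩
    exact Finset.sum_nonneg fun p _ =>
      mul_nonneg (hQnn p) (by linarith [(hπ p).2])
  apply le_csInf
  · exact ⟨1, 0, Matrix.PosSemidef.zero, by simpa using Matrix.PosSemidef.one,
      by simpa using hα0, by simp⟩
  rintro b ⟨T, hT, hT1, hTρle, rfl⟩
  obtain ⟨A, hAdef⟩ : ∃ A, A = Xᴴ * T * Y := ⟨_, rfl⟩
  obtain ⟨G, hGdef⟩ : ∃ G, G = Xᴴ * (1 - T) * Y := ⟨_, rfl⟩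
  obtain ⟨C, hCdef⟩ : ∃ C, C = Xᴴ * Y := ⟨_, rfl⟩
  have hCentry : ∀ (i j : Fin d), C i j = star (x i) ⬝ᵥ y j := by
    intro i j; rw [hCdef, hXdef, hYdef]; exact NSaux.entryC x y i j
  have hCAG : ∀ i j, C i j = A i j + G i j := by
    intro i j
    have : C = A + G := by
      rw [hCdef, hAdef, hGdef]; noncomm_ring
    rw [this]; rfl
  -- the classical test
  set π : Fin d × Fin d → ℝ := fun p =>
    if Complex.normSq (C p.1 p.2) = 0 then 1
    else min 1 (Complex.normSq (A p.1 p.2) / ((1 - s) * Complex.normSq (C p.1 p.2))) with hπdef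
  have hπ01 : ∀ p, 0 ≤ π p ∧ π p ≤ 1 := by
    intro p
    by_cases h : Complex.normSq (C p.1 p.2) = 0
    · have : π p = 1 := by simp only [hπdef]; rw [if_pos h]
      rw [this]; norm_num
    · have hpos : 0 < Complex.normSq (C p.1 p.2) :=
        lt_of_le_of_ne (Complex.normSq_nonneg _) (Ne.symm h)
      have hpe : π p = min 1 (Complex.normSq (A p.1 p.2)
          / ((1 - s) * Complex.normSq (C p.1 p.2))) := by
        simp only [hπdef]; rw [if_neg h]
      rw [hpe]
      refine ⟨le_min zero_le_one (div_nonneg (Complex.normSq_nonneg _)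
        (mul_nonneg h1s.le hpos.le)), min_le_left _ _⟩
  have hkey : ∀ p : Fin d × Fin d,
      s * (1 - s) * Complex.normSq (C p.1 p.2)
        ≤ s * Complex.normSq (A p.1 p.2) + (1 - s) * Complex.normSq (G p.1 p.2) := by
    intro p; rw [hCAG p.1 p.2]; exact NSaux.key_ineq s hs0 hs1 _ _
  have hP2 : ∀ p : Fin d × Fin d,
      Complex.normSq (C p.1 p.2) * π p ≤ Complex.normSq (A p.1 p.2) / (1 - s) := by
    intro p
    by_cases h : Complex.normSq (C p.1 p.2) = 0
    · rw [h, zero_mul]; exact div_nonneg (Complex.normSq_nonneg _) h1s.le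
    · have hpos : 0 < Complex.normSq (C p.1 p.2) :=
        lt_of_le_of_ne (Complex.normSq_nonneg _) (Ne.symm h)
      have hpe : π p = min 1 (Complex.normSq (A p.1 p.2)
          / ((1 - s) * Complex.normSq (C p.1 p.2))) := by
        simp only [hπdef]; rw [if_neg h]
      rw [hpe]
      calc Complex.normSq (C p.1 p.2) *
            min 1 (Complex.normSq (A p.1 p.2) / ((1 - s) * Complex.normSq (C p.1 p.2)))
          ≤ Complex.normSq (C p.1 p.2) *
            (Complex.normSq (A p.1 p.2) / ((1 - s) * Complex.normSq (C p.1 p.2))) :=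
            mul_le_mul_of_nonneg_left (min_le_right _ _) hpos.le
        _ = Complex.normSq (A p.1 p.2) / (1 - s) := by
            field_simp
  have hQ2 : ∀ p : Fin d × Fin d,
      s * (Complex.normSq (C p.1 p.2) * (1 - π p)) ≤ Complex.normSq (G p.1 p.2) := by
    intro p
    by_cases h : Complex.normSq (C p.1 p.2) = 0
    · rw [h, zero_mul, mul_zero]; exact Complex.normSq_nonneg _
    · have hpos : 0 < Complex.normSq (C p.1 p.2) :=
        lt_of_le_of_ne (Complex.normSq_nonneg _) (Ne.symm h)
      have hpe : π p = min 1 (Complex.normSq (A p.1 p.2)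
          / ((1 - s) * Complex.normSq (C p.1 p.2))) := by
        simp only [hπdef]; rw [if_neg h]
      rw [hpe]
      set q := Complex.normSq (A p.1 p.2) / ((1 - s) * Complex.normSq (C p.1 p.2)) with hq
      by_cases h1 : 1 ≤ q
      · rw [min_eq_left h1]
        simpa using Complex.normSq_nonneg (G p.1 p.2)
      · push_neg at h1
        rw [min_eq_right h1.le]
        have hqe : (1 - s) * Complex.normSq (C p.1 p.2) * q = Complex.normSq (A p.1 p.2) := by
          rw [hq]; field_simp
        have hqe2 : s * ((1 - s) * Complex.normSq (C p.1 p.2) * q)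
            = s * Complex.normSq (A p.1 p.2) := by rw [hqe]
        have hk := hkey p
        rw [← mul_le_mul_iff_right₀ h1s]
        nlinarith [hk, hqe2]
  -- diagonal comparison facts
  have hdiag : ∀ (T' : Matrix (Fin d) (Fin d) ℂ), T'.PosSemidef → (1 - T').PosSemidef →
      ∀ (U : Matrix (Fin d) (Fin d) ℂ) (i : Fin d),
      ((Uᴴ * (T' * T') * U) i i).re ≤ ((Uᴴ * T' * U) i i).re := by
    intro T' h1 h2 U i
    have hpsd : (Uᴴ * (T' - T' * T') * U).PosSemidef :=
      (NSaux.sub_sq h1 h2).conjTranspose_mul_mul_same U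
    have hsplit : Uᴴ * (T' - T' * T') * U = Uᴴ * T' * U - Uᴴ * (T' * T') * U := by
      noncomm_ring
    have := NSaux.diag_re hpsd i
    rw [hsplit] at this
    simp only [Matrix.sub_apply, Complex.sub_re] at this
    linarith
  -- trace identities
  have htr : ∀ (M : Matrix (Fin d) (Fin d) ℂ) (U D : Matrix (Fin d) (Fin d) ℂ) (v : Fin d → ℝ),
      D = diagonal (fun i => (v i : ℂ)) →
      (M * (U * D * Uᴴ)).trace.re = ∑ i, v i * ((Uᴴ * M * U) i i).re := by
    intro M U D v hD
    have h1 : M * (U * D * Uᴴ) = (M * U * D) * Uᴴ := by noncomm_ring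
    have h2 : Uᴴ * (M * U * D) = (Uᴴ * M * U) * D := by noncomm_ring
    rw [h1, Matrix.trace_mul_comm, h2, hD, NSaux.trace_diag]
  -- type-I error bound
  have hsumP : (∑ p, P p * π p) ≤ α / (1 - s) := by
    have step1 : (∑ p, P p * π p)
        ≤ ∑ p : Fin d × Fin d, lam p.1 * (Complex.normSq (A p.1 p.2) / (1 - s)) := by
      apply Finset.sum_le_sum
      intro p _
      rw [hP p, ← hCentry p.1 p.2, mul_assoc]
      exact mul_le_mul_of_nonneg_left (hP2 p) (hlam p.1)
    have hAA : A * Aᴴ = Xᴴ * (T * T) * X := by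
      rw [hAdef]
      simp only [Matrix.conjTranspose_mul, Matrix.conjTranspose_conjTranspose, hT.1.eq]
      calc Xᴴ * T * Y * (Yᴴ * (T * X)) = Xᴴ * T * (Y * Yᴴ) * T * X := by noncomm_ring
        _ = Xᴴ * (T * T) * X := by rw [hYU']; noncomm_ring
    have step2 : (∑ p : Fin d × Fin d, lam p.1 * (Complex.normSq (A p.1 p.2) / (1 - s)))
        = (∑ i, lam i * ((Xᴴ * (T * T) * X) i i).re) / (1 - s) := by
      rw [Fintype.sum_prod_type, Finset.sum_div]
      apply Finset.sum_congr rfl; intro i _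
      simp only [← mul_div_assoc]
      rw [← Finset.sum_div, ← Finset.mul_sum, NSaux.row_normSq, hAA]
    have step3 : (∑ i, lam i * ((Xᴴ * (T * T) * X) i i).re)
        ≤ ∑ i, lam i * ((Xᴴ * T * X) i i).re := by
      apply Finset.sum_le_sum; intro i _
      exact mul_le_mul_of_nonneg_left (hdiag T hT hT1 X i) (hlam i)
    have step4 : (∑ i, lam i * ((Xᴴ * T * X) i i).re) = (T * ρ).trace.re := by
      rw [hρX, htr T X Dρ lam hDρ]
    calc (∑ p, P p * π p)
        ≤ ∑ p : Fin d × Fin d, lam p.1 * (Complex.normSq (A p.1 p.2) / (1 - s)) := step1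
      _ = (∑ i, lam i * ((Xᴴ * (T * T) * X) i i).re) / (1 - s) := step2
      _ ≤ (∑ i, lam i * ((Xᴴ * T * X) i i).re) / (1 - s) := by gcongr
      _ = (T * ρ).trace.re / (1 - s) := by rw [step4]
      _ ≤ α / (1 - s) := by gcongr
  -- type-II side
  have hGG : Gᴴ * G = Yᴴ * ((1 - T) * (1 - T)) * Y := by
    rw [hGdef]
    simp only [Matrix.conjTranspose_mul, Matrix.conjTranspose_conjTranspose, hT1.1.eq]
    calc _ = Yᴴ * ((1 - T) * (X * Xᴴ) * (1 - T)) * Y := by noncomm_ring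
      _ = Yᴴ * ((1 - T) * (1 - T)) * Y := by rw [hXU']; noncomm_ring
  have hT' : (1 - (1 - T)).PosSemidef := by simpa using hT
  have hsumQ : s * (∑ p, Q p * (1 - π p)) ≤ 1 - (T * σ).trace.re := by
    have step1 : s * (∑ p, Q p * (1 - π p))
        ≤ ∑ p : Fin d × Fin d, mu p.2 * Complex.normSq (G p.1 p.2) := by
      rw [Finset.mul_sum]
      apply Finset.sum_le_sum; intro p _
      rw [hQ p, ← hCentry p.1 p.2]
      calc s * (mu p.2 * Complex.normSq (C p.1 p.2) * (1 - π p))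
          = mu p.2 * (s * (Complex.normSq (C p.1 p.2) * (1 - π p))) := by ring
        _ ≤ mu p.2 * Complex.normSq (G p.1 p.2) :=
            mul_le_mul_of_nonneg_left (hQ2 p) (hmu p.2)
    have step2 : (∑ p : Fin d × Fin d, mu p.2 * Complex.normSq (G p.1 p.2))
        = ∑ j, mu j * ((Yᴴ * ((1 - T) * (1 - T)) * Y) j j).re := by
      rw [Fintype.sum_prod_type, Finset.sum_comm]
      apply Finset.sum_congr rfl; intro j _
      simp only
      rw [← Finset.mul_sum, NSaux.col_normSq, hGG]
    have step3 : (∑ j, mu j * ((Yᴴ * ((1 - T) * (1 - T)) * Y) j j).re)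
        ≤ ∑ j, mu j * ((Yᴴ * (1 - T) * Y) j j).re := by
      apply Finset.sum_le_sum; intro j _
      exact mul_le_mul_of_nonneg_left (hdiag (1 - T) hT1 hT' Y j) (hmu j)
    have step4 : (∑ j, mu j * ((Yᴴ * (1 - T) * Y) j j).re) = ((1 - T) * σ).trace.re := by
      rw [hσY, htr (1 - T) Y Dσ mu hDσ]
    have step5 : ((1 - T) * σ).trace.re = 1 - (T * σ).trace.re := by
      have e : (1 - T) * σ = σ - T * σ := by noncomm_ring
      rw [e, Matrix.trace_sub, hσtr, Complex.sub_re, Complex.one_re]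
    calc s * (∑ p, Q p * (1 - π p))
        ≤ ∑ p : Fin d × Fin d, mu p.2 * Complex.normSq (G p.1 p.2) := step1
      _ = ∑ j, mu j * ((Yᴴ * ((1 - T) * (1 - T)) * Y) j j).re := step2
      _ ≤ ∑ j, mu j * ((Yᴴ * (1 - T) * Y) j j).re := step3
      _ = ((1 - T) * σ).trace.re := step4
      _ = 1 - (T * σ).trace.re := step5
  have h1 : cBeta (α / (1 - s)) P Q ≤ ∑ p, Q p * (1 - π p) := by
    unfold cBeta
    exact csInf_le hcbdd ⟨π, hπ01, hsumP, rfl⟩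
  calc s * cBeta (α / (1 - s)) P Q ≤ s * ∑ p, Q p * (1 - π p) :=
        mul_le_mul_of_nonneg_left h1 hs0
    _ ≤ 1 - (T * σ).trace.re := hsumQ
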